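/- Let H_0, ..., H_{K-1} be symmetric d×d matrices with ‖H_k‖ ≤ H, α > 0, g ∈ R^d, and 0 ≤ L ≤ K. Then ‖∏_{k=0}^{K-1}(I - α H_k) g - ∏_{k=K-L}^{K-1}(I - α H_k) g‖ ≤ [(1+αH)^K - (1+αH)^L] ‖g‖. -/

import Mathlib

open Matrix Finset

variable {d : ℕ}

/-- Operator (spectral) norm of a real `d × d` matrix, acting on Euclidean space. -/
noncomputable def matOpNorm (M : Matrix (Fin d) (Fin d) ℝ) : ℝ :=
  ‖Matrix.toEuclideanCLM (𝕜 := ℝ) M‖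

/-- Apply a matrix to a vector of Euclidean space. -/
noncomputable def applyM (M : Matrix (Fin d) (Fin d) ℝ) (g : EuclideanSpace ℝ (Fin d)) :
    EuclideanSpace ℝ (Fin d) :=
  Matrix.toEuclideanCLM (𝕜 := ℝ) M g

/-- Ordered product `∏_{k=a}^{a+n-1} (I - α H k)`, factors ordered by increasing `k`. -/
def mulList (H : ℕ → Matrix (Fin d) (Fin d) ℝ) (α : ℝ) (a n : ℕ) :
    Matrix (Fin d) (Fin d) ℝ :=
  ((List.range' a n).map (fun k => (1 : Matrix (Fin d) (Fin d) ℝ) - α • H k)).prod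

/-- Truncated binomial expansion
`I + Σ_{l=1}^{L} Σ_{0 ≤ k₁ < … < k_l < K} ∏_{i=1}^{l} (-α H_{k_i})`,
with each inner product ordered by increasing index. -/
def binomSum (H : ℕ → Matrix (Fin d) (Fin d) ℝ) (α : ℝ) (K L : ℕ) :
    Matrix (Fin d) (Fin d) ℝ :=
  1 + ∑ l ∈ Finset.Icc 1 L, ∑ s ∈ (Finset.range K).powersetCard l,
      ((s.sort (· ≤ ·)).map (fun k => -(α • H k))).prod

section Aux

variable (Hm : ℕ → Matrix (Fin d) (Fin d) ℝ) (α H : ℝ)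

private noncomputable def φM (M : Matrix (Fin d) (Fin d) ℝ) :
    EuclideanSpace ℝ (Fin d) →L[ℝ] EuclideanSpace ℝ (Fin d) :=
  Matrix.toEuclideanCLM (𝕜 := ℝ) M

private lemma φM_mul (A B : Matrix (Fin d) (Fin d) ℝ) : φM (A * B) = φM A * φM B :=
  map_mul _ _ _

private lemma mulList_succ (a n : ℕ) :
    mulList Hm α a (n + 1) = (1 - α • Hm a) * mulList Hm α (a + 1) n := by
  simp [mulList, List.range'_succ]

private lemma mulList_add (a m n : ℕ) :
    mulList Hm α a (m + n) = mulList Hm α a m * mulList Hm α (a + m) n := by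
  have h : List.range' a m ++ List.range' (a + m) n = List.range' a (m + n) := by
    have := @List.range'_append a m n 1
    simpa [Nat.add_comm n m] using this
  simp only [mulList]
  rw [← h, List.map_append, List.prod_append]

variable {Hm α H}

private lemma norm_one_le' : ‖(1 : EuclideanSpace ℝ (Fin d) →L[ℝ] EuclideanSpace ℝ (Fin d))‖ ≤ 1 := by
  rw [ContinuousLinearMap.one_def]
  exact ContinuousLinearMap.norm_id_le

private lemma norm_factor_le (hnorm : ∀ k, matOpNorm (Hm k) ≤ H) (hα : 0 ≤ α) (k : ℕ) :
    ‖φM ((1 : Matrix (Fin d) (Fin d) ℝ) - α • Hm k)‖ ≤ 1 + α * H := by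
  have h1 : φM ((1 : Matrix (Fin d) (Fin d) ℝ) - α • Hm k) = 1 - α • φM (Hm k) := by
    simp [φM, map_sub, _root_.map_smul]
  rw [h1]
  have hs : ‖α • φM (Hm k)‖ = α * ‖φM (Hm k)‖ := by
    have := norm_smul α (φM (Hm k))
    rwa [Real.norm_eq_abs, abs_of_nonneg hα] at this
  have h2 : α * ‖φM (Hm k)‖ ≤ α * H :=
    mul_le_mul_of_nonneg_left (hnorm k) hα
  calc ‖(1 : _) - α • φM (Hm k)‖ ≤ ‖(1 : EuclideanSpace ℝ (Fin d) →L[ℝ] _)‖ + ‖α • φM (Hm k)‖ :=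
        norm_sub_le _ _
    _ ≤ 1 + α * H := by rw [hs]; linarith [norm_one_le' (d := d)]

private lemma norm_mulList_le (hnorm : ∀ k, matOpNorm (Hm k) ≤ H) (hα : 0 ≤ α) (hH : 0 ≤ H)
    (a n : ℕ) : ‖φM (mulList Hm α a n)‖ ≤ (1 + α * H) ^ n := by
  induction n generalizing a with
  | zero =>
    have h : φM (d := d) (mulList Hm α a 0) = 1 := map_one _
    rw [pow_zero, h]
    exact norm_one_le'
  | succ n ih =>
    rw [mulList_succ, φM_mul, pow_succ']
    calc ‖φM (1 - α • Hm a) * φM (mulList Hm α (a + 1) n)‖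
        ≤ ‖φM ((1 : Matrix (Fin d) (Fin d) ℝ) - α • Hm a)‖ * ‖φM (mulList Hm α (a + 1) n)‖ :=
          norm_mul_le _ _
      _ ≤ (1 + α * H) * (1 + α * H) ^ n := by
          apply mul_le_mul (norm_factor_le hnorm hα a) (ih (a + 1)) (norm_nonneg _) (by positivity)

private lemma norm_mulList_sub_one_le (hnorm : ∀ k, matOpNorm (Hm k) ≤ H) (hα : 0 ≤ α)
    (hH : 0 ≤ H) (a n : ℕ) : ‖φM (mulList Hm α a n) - 1‖ ≤ (1 + α * H) ^ n - 1 := by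
  induction n generalizing a with
  | zero =>
    have h : φM (d := d) (mulList Hm α a 0) = 1 := map_one _
    rw [h, sub_self, norm_zero, pow_zero, sub_self]
  | succ n ih =>
    have hA : φM ((1 : Matrix (Fin d) (Fin d) ℝ) - α • Hm a) - 1 = -(α • φM (Hm a)) := by
      have : φM ((1 : Matrix (Fin d) (Fin d) ℝ) - α • Hm a) = 1 - α • φM (Hm a) := by
        simp [φM, map_sub, _root_.map_smul]
      rw [this, sub_sub_cancel_left]
    have key : φM (mulList Hm α a (n + 1)) - 1
        = φM ((1 : Matrix (Fin d) (Fin d) ℝ) - α • Hm a) * (φM (mulList Hm α (a + 1) n) - 1)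
          + (φM ((1 : Matrix (Fin d) (Fin d) ℝ) - α • Hm a) - 1) := by
      rw [mulList_succ, φM_mul, mul_sub, mul_one, sub_add_sub_cancel]
    rw [key]
    have h1 : ‖φM ((1 : Matrix (Fin d) (Fin d) ℝ) - α • Hm a) * (φM (mulList Hm α (a + 1) n) - 1)‖
        ≤ (1 + α * H) * ((1 + α * H) ^ n - 1) := by
      calc _ ≤ ‖φM ((1 : Matrix (Fin d) (Fin d) ℝ) - α • Hm a)‖ * ‖φM (mulList Hm α (a + 1) n) - 1‖ :=
            norm_mul_le _ _
        _ ≤ (1 + α * H) * ((1 + α * H) ^ n - 1) := by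
            apply mul_le_mul (norm_factor_le hnorm hα a) (ih (a + 1)) (norm_nonneg _) (by positivity)
    have h2 : ‖φM ((1 : Matrix (Fin d) (Fin d) ℝ) - α • Hm a) - 1‖ ≤ α * H := by
      have hs : ‖α • φM (Hm a)‖ = α * ‖φM (Hm a)‖ := by
        have := norm_smul α (φM (Hm a))
        rwa [Real.norm_eq_abs, abs_of_nonneg hα] at this
      rw [hA, norm_neg, hs]
      exact mul_le_mul_of_nonneg_left (hnorm a) hα
    calc ‖_ + _‖ ≤ (1 + α * H) * ((1 + α * H) ^ n - 1) + α * H :=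
          le_trans (norm_add_le _ _) (add_le_add h1 h2)
      _ = (1 + α * H) ^ (n + 1) - 1 := by ring
end Aux

/-- TruncMAML error bound under the Lipschitz-gradient assumption:
`‖∏_{k=0}^{K-1}(I - α H_k) g - ∏_{k=K-L}^{K-1}(I - α H_k) g‖ ≤ [(1+αH)^K - (1+αH)^L] ‖g‖`. -/
theorem truncmaml_error_bound_smooth (K L : ℕ) (Hm : ℕ → Matrix (Fin d) (Fin d) ℝ) (α H : ℝ)
    (hsymm : ∀ k, (Hm k).IsSymm) (hnorm : ∀ k, matOpNorm (Hm k) ≤ H) (hα : 0 < α)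
    (hL : L ≤ K) (g : EuclideanSpace ℝ (Fin d)) :
    ‖applyM (mulList Hm α 0 K) g - applyM (mulList Hm α (K - L) L) g‖
      ≤ ((1 + α * H) ^ K - (1 + α * H) ^ L) * ‖g‖ := by
  have hα0 : (0:ℝ) ≤ α := hα.le
  have hH : (0:ℝ) ≤ H := le_trans (norm_nonneg _) (hnorm 0)
  have hks : K - L + L = K := Nat.sub_add_cancel hL
  have hdiff : applyM (mulList Hm α 0 K) g - applyM (mulList Hm α (K - L) L) g
      = ((φM (mulList Hm α 0 (K - L)) - 1) * φM (mulList Hm α (K - L) L)) g := by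
    have hsplit : mulList Hm α 0 K = mulList Hm α 0 (K - L) * mulList Hm α (K - L) L := by
      conv_lhs => rw [← hks]
      simpa using mulList_add Hm α 0 (K - L) L
    simp [applyM, hsplit, φM, sub_mul, _root_.map_mul]
  rw [hdiff]
  calc ‖((φM (mulList Hm α 0 (K - L)) - 1) * φM (mulList Hm α (K - L) L)) g‖
      ≤ ‖(φM (mulList Hm α 0 (K - L)) - 1) * φM (mulList Hm α (K - L) L)‖ * ‖g‖ :=
        ContinuousLinearMap.le_opNorm _ _
    _ ≤ ((1 + α * H) ^ K - (1 + α * H) ^ L) * ‖g‖ := by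
        apply mul_le_mul_of_nonneg_right _ (norm_nonneg g)
        calc ‖(φM (mulList Hm α 0 (K - L)) - 1) * φM (mulList Hm α (K - L) L)‖
            ≤ ‖φM (mulList Hm α 0 (K - L)) - 1‖ * ‖φM (mulList Hm α (K - L) L)‖ := norm_mul_le _ _
          _ ≤ ((1 + α * H) ^ (K - L) - 1) * (1 + α * H) ^ L := by
              apply mul_le_mul (norm_mulList_sub_one_le hnorm hα0 hH 0 (K - L))
                (norm_mulList_le hnorm hα0 hH (K - L) L) (norm_nonneg _)
              have : (1:ℝ) ≤ (1 + α * H) ^ (K - L) :=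
                one_le_pow₀ (by nlinarith)
              linarith
          _ = (1 + α * H) ^ K - (1 + α * H) ^ L := by
              have hp : (1 + α * H) ^ (K - L) * (1 + α * H) ^ L = (1 + α * H) ^ K := by
                rw [← pow_add, hks]
              rw [sub_mul, one_mul, hp]
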